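/- In type Dₙ (n ≥ 5), the dominant coweight ω₁^∨ = e₁ has a unique minimal degeneration above it among dominant coweights congruent to it modulo the coroot lattice: the unique cover of ω₁^∨ in the dominance order is μ = (1,1,1,0,…,0) = ω₃^∨. -/
import Mathlib


/-- The simple coroots of type `Dₙ` in `ℤⁿ`: `αᵢ^∨ = eᵢ - eᵢ₊₁` for `i ≤ n-1` and
`αₙ^∨ = e_{n-1} + eₙ` (indices `i : Fin n` are 0-based). -/
def Dcoroot (n : ℕ) (i : Fin n) : Fin n → ℤ :=
  fun j => if i.val = n - 1 then (if j.val = n - 2 ∨ j.val = n - 1 then 1 else 0)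
    else if j.val = i.val then 1 else if j.val = i.val + 1 then -1 else 0

/-- The fundamental coweight `ωₘ^∨ = e₁ + ⋯ + eₘ` of type `Dₙ` for `m ≤ n - 2`. -/
def Domega (n m : ℕ) : Fin n → ℤ := fun j => if j.val < m then 1 else 0

/-- Dominance order: `μ - λ` is a nonnegative integer combination of simple coroots. -/
def DdomLE (n : ℕ) (lam mu : Fin n → ℤ) : Prop :=
  ∃ c : Fin n → ℕ, mu - lam = ∑ i, (c i : ℤ) • Dcoroot n i

/-- Dominant coweights of type `Dₙ`: `μ₁ ≥ ⋯ ≥ μₙ` and `μ_{n-1} + μₙ ≥ 0`. -/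
def Ddominant (n : ℕ) (mu : Fin n → ℤ) : Prop :=
  Antitone mu ∧ ∀ i j : Fin n, i.val = n - 2 → j.val = n - 1 → 0 ≤ mu i + mu j

/-- in type `Dₙ` (`n ≥ 5`), `ω₁^∨ = e₁` has a unique minimal degeneration
among dominant coweights congruent to it modulo the coroot lattice: its unique cover in
the dominance order is `ω₃^∨ = (1,1,1,0,…,0)`. -/
lemma eval0 (n : ℕ) (hn : 5 ≤ n) (c : Fin n → ℤ) (h : 0 < n) :
    ∑ i, c i * Dcoroot n i ⟨0, h⟩ = c ⟨0, h⟩ := by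
  have hp : ∀ i : Fin n, c i * Dcoroot n i ⟨0, h⟩ =
      if i = (⟨0, h⟩ : Fin n) then c i else 0 := by
    intro i
    obtain ⟨iv, hi⟩ := i
    simp only [Dcoroot, Fin.mk.injEq]
    split_ifs <;> first | (exfalso; omega) | contradiction | tauto | simp
  rw [Finset.sum_congr rfl (fun i _ => hp i), Finset.sum_ite_eq' Finset.univ _ c]
  simp

lemma evalMid (n m : ℕ) (hn : 5 ≤ n) (h1 : 1 ≤ m) (h2 : m ≤ n - 3) (c : Fin n → ℤ)
    (h : m < n) (h' : m - 1 < n) :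
    ∑ i, c i * Dcoroot n i ⟨m, h⟩ = c ⟨m, h⟩ - c ⟨m - 1, h'⟩ := by
  have hp : ∀ i : Fin n, c i * Dcoroot n i ⟨m, h⟩ =
      (if i = (⟨m, h⟩ : Fin n) then c i else 0)
      - (if i = (⟨m - 1, h'⟩ : Fin n) then c i else 0) := by
    intro i
    obtain ⟨iv, hi⟩ := i
    simp only [Dcoroot, Fin.mk.injEq]
    split_ifs <;> first | (exfalso; omega) | contradiction | tauto | simp
  rw [Finset.sum_congr rfl (fun i _ => hp i), Finset.sum_sub_distrib,
    Finset.sum_ite_eq' Finset.univ _ c, Finset.sum_ite_eq' Finset.univ _ c]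
  simp

lemma evalN2 (n : ℕ) (hn : 5 ≤ n) (c : Fin n → ℤ) (h : n - 2 < n) (h3 : n - 3 < n)
    (h1 : n - 1 < n) :
    ∑ i, c i * Dcoroot n i ⟨n - 2, h⟩ = c ⟨n - 2, h⟩ - c ⟨n - 3, h3⟩ + c ⟨n - 1, h1⟩ := by
  have hp : ∀ i : Fin n, c i * Dcoroot n i ⟨n - 2, h⟩ =
      (if i = (⟨n - 2, h⟩ : Fin n) then c i else 0)
      - (if i = (⟨n - 3, h3⟩ : Fin n) then c i else 0)
      + (if i = (⟨n - 1, h1⟩ : Fin n) then c i else 0) := by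
    intro i
    obtain ⟨iv, hi⟩ := i
    simp only [Dcoroot, Fin.mk.injEq]
    split_ifs <;> first | (exfalso; omega) | contradiction | tauto | simp
  rw [Finset.sum_congr rfl (fun i _ => hp i), Finset.sum_add_distrib, Finset.sum_sub_distrib,
    Finset.sum_ite_eq' Finset.univ _ c, Finset.sum_ite_eq' Finset.univ _ c,
    Finset.sum_ite_eq' Finset.univ _ c]
  simp

lemma evalN1 (n : ℕ) (hn : 5 ≤ n) (c : Fin n → ℤ) (h1 : n - 1 < n) (h2 : n - 2 < n) :
    ∑ i, c i * Dcoroot n i ⟨n - 1, h1⟩ = c ⟨n - 1, h1⟩ - c ⟨n - 2, h2⟩ := by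
  have hp : ∀ i : Fin n, c i * Dcoroot n i ⟨n - 1, h1⟩ =
      (if i = (⟨n - 1, h1⟩ : Fin n) then c i else 0)
      - (if i = (⟨n - 2, h2⟩ : Fin n) then c i else 0) := by
    intro i
    obtain ⟨iv, hi⟩ := i
    simp only [Dcoroot, Fin.mk.injEq]
    split_ifs <;> first | (exfalso; omega) | contradiction | tauto | simp
  rw [Finset.sum_congr rfl (fun i _ => hp i), Finset.sum_sub_distrib,
    Finset.sum_ite_eq' Finset.univ _ c, Finset.sum_ite_eq' Finset.univ _ c]
  simp
section chains
variable (n : ℕ) (w b : ℕ → ℤ)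
  (hm : ∀ m, 1 ≤ m → m ≤ n - 3 → w m = b m - b (m - 1))

include hm in
lemma chain0 : ∀ a k, 1 ≤ a → a + k ≤ n - 3 →
    (∀ j, a ≤ j → j ≤ a + k → 0 ≤ w j) → b (a - 1) ≤ b (a + k) := by
  intro a k
  induction k with
  | zero =>
    intro ha hk hw
    have h1 := hw a le_rfl (by omega)
    have h2 := hm a ha (by omega)
    have h3 : a + 0 = a := rfl
    rw [h3]
    omega
  | succ k ih =>
    intro ha hk hw
    have h1 := ih ha (by omega) (fun j hj hj' => hw j hj (by omega))
    have h2 := hw (a + (k + 1)) (by omega) (by omega)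
    have h3 := hm (a + (k + 1)) (by omega) (by omega)
    have h4 : a + (k + 1) - 1 = a + k := by omega
    rw [h4] at h3
    have : a + (k+1) = a + k + 1 := by omega
    omega

include hm in
lemma chain1 : ∀ a k, 1 ≤ a → a + k ≤ n - 3 →
    (∀ j, a ≤ j → j ≤ a + k → 1 ≤ w j) → b (a - 1) + (k + 1 : ℤ) ≤ b (a + k) := by
  intro a k
  induction k with
  | zero =>
    intro ha hk hw
    have h1 := hw a le_rfl (by omega)
    have h2 := hm a ha (by omega)
    have h3 : a + 0 = a := rfl
    rw [h3]
    omega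
  | succ k ih =>
    intro ha hk hw
    have h1 := ih ha (by omega) (fun j hj hj' => hw j hj (by omega))
    have h2 := hw (a + (k + 1)) (by omega) (by omega)
    have h3 := hm (a + (k + 1)) (by omega) (by omega)
    have h4 : a + (k + 1) - 1 = a + k := by omega
    rw [h4] at h3
    push_cast
    push_cast at h1
    omega

include hm in
lemma chainEq : ∀ a k, 1 ≤ a → a + k ≤ n - 3 →
    (∀ j, a ≤ j → j ≤ a + k → w j = 0) → b (a + k) = b (a - 1) := by
  intro a k
  induction k with
  | zero =>
    intro ha hk hw
    have h1 := hw a le_rfl (by omega)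
    have h2 := hm a ha (by omega)
    have h3 : a + 0 = a := rfl
    rw [h3]
    omega
  | succ k ih =>
    intro ha hk hw
    have h1 := ih ha (by omega) (fun j hj hj' => hw j hj (by omega))
    have h2 := hw (a + (k + 1)) (by omega) (by omega)
    have h3 := hm (a + (k + 1)) (by omega) (by omega)
    have h4 : a + (k + 1) - 1 = a + k := by omega
    rw [h4] at h3
    omega
end chains

lemma key (n : ℕ) (hn : 5 ≤ n) (w b : ℕ → ℤ)
    (hb : ∀ m, 0 ≤ b m)
    (h0 : w 0 = 1 + b 0)
    (hm : ∀ m, 1 ≤ m → m ≤ n - 3 → w m = b m - b (m - 1))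
    (h2 : w (n - 2) = b (n - 2) - b (n - 3) + b (n - 1))
    (h1 : w (n - 1) = b (n - 1) - b (n - 2))
    (hanti : ∀ a a', a ≤ a' → a' ≤ n - 1 → w a' ≤ w a)
    (hsum : 0 ≤ w (n - 2) + w (n - 1))
    (hne : ¬ (w 0 = 1 ∧ ∀ m, 1 ≤ m → m ≤ n - 1 → w m = 0)) :
    1 ≤ b 1 ∧ (∀ m, 2 ≤ m → m ≤ n - 3 → 2 ≤ b m) ∧ 1 ≤ b (n - 2) ∧ 1 ≤ b (n - 1) := by
  -- Claim 1
  have c1 : 1 ≤ b (n - 1) := by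
    by_contra hc
    have e1 : b (n - 1) = 0 := by have := hb (n - 1); omega
    have e3 : b (n - 3) = 0 := by have := hb (n - 3); omega
    have hm3 := hm (n - 3) (by omega) (by omega)
    have h34 : n - 3 - 1 = n - 4 := by omega
    rw [h34, e3] at hm3
    -- w (n-3) = - b (n-4) ≤ 0
    have hw3 : w (n - 3) ≤ 0 := by have := hb (n - 4); omega
    have hw2 : w (n - 2) ≤ w (n - 3) := hanti _ _ (by omega) (by omega)
    -- b (n-2) = w (n-2) ≤ 0, so = 0
    have e2 : b (n - 2) = 0 := by have := hb (n - 2); omega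
    have ew2 : w (n - 2) = 0 := by omega
    have ew1 : w (n - 1) = 0 := by omega
    -- all w j ≥ 0 for j ≤ n-3, j ≥ 1
    have hw0 : ∀ j, 1 ≤ j → j ≤ n - 3 → 0 ≤ w j := by
      intro j hj hj'
      have := hanti j (n - 2) (by omega) (by omega)
      omega
    -- b j = 0 for all j ≤ n - 3
    have hbz : ∀ j, j ≤ n - 3 → b j = 0 := by
      intro j hj
      rcases eq_or_lt_of_le hj with rfl | hlt
      · exact e3
      · have := chain0 n w b hm (j + 1) (n - 3 - (j + 1)) (by omega) (by omega)
          (fun j' hj' hj'' => hw0 j' (by omega) (by omega))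
        have h5 : j + 1 - 1 = j := by omega
        have h6 : j + 1 + (n - 3 - (j + 1)) = n - 3 := by omega
        rw [h5, h6] at this
        have := hb j
        omega
    apply hne
    constructor
    · have := hbz 0 (by omega); omega
    · intro m hm1 hm2
      rcases Nat.lt_or_ge m (n - 2) with hlt | hge
      · have := hm m hm1 (by omega)
        have := hbz m (by omega)
        have := hbz (m - 1) (by omega)
        omega
      · rcases Nat.eq_or_lt_of_le hge with heq | hlt
        · rw [← heq]; exact ew2
        · have hm9 : m = n - 1 := by omega
          rw [hm9]; exact ew1
  -- Claim 2
  have c2 : 1 ≤ b (n - 2) := by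
    by_contra hc
    have e2 : b (n - 2) = 0 := by have := hb (n - 2); omega
    have ha := hanti (n - 2) (n - 1) (by omega) (by omega)
    have e3 : b (n - 3) = 0 := by have := hb (n - 3); omega
    have hm3 := hm (n - 3) (by omega) (by omega)
    have h34 : n - 3 - 1 = n - 4 := by omega
    rw [h34, e3] at hm3
    have := hanti (n - 3) (n - 1) (by omega) (by omega)
    have := hb (n - 4)
    omega
  -- Claim 3
  have c3 : 1 ≤ b 1 := by
    by_contra hc
    have e1 : b 1 = 0 := by have := hb 1; omega
    have hm1' := hm 1 (by omega) (by omega)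
    have hw1 : w 1 ≤ 0 := by have := hb 0; simp at hm1'; omega
    have ha2 := hanti 1 (n - 2) (by omega) (by omega)
    have ha1 := hanti 1 (n - 1) (by omega) (by omega)
    have ew2 : w (n - 2) = 0 := by omega
    have ew1 : w (n - 1) = 0 := by omega
    have e3 : b (n - 3) = 2 * b (n - 1) := by omega
    have hwj : ∀ j, 1 ≤ j → j ≤ n - 3 → w j = 0 := by
      intro j hj hj'
      have := hanti j (n - 2) (by omega) (by omega)
      have := hanti 1 j hj (by omega)
      omega
    have := chainEq n w b hm 1 (n - 4) (by omega) (by omega)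
      (fun j hj hj' => hwj j hj (by omega))
    have h5 : 1 + (n - 4) = n - 3 := by omega
    rw [h5] at this
    simp at this
    -- b (n-3) = b 0, and w 1 = 0 means b 1 = b 0; b 1 = 0
    have hw1' : w 1 = 0 := hwj 1 (by omega) (by omega)
    simp at hm1'
    omega
  refine ⟨c3, ?_, c2, c1⟩
  intro m hm2 hm3
  by_contra hc
  rcases le_or_gt (w m) 0 with hle | hlt
  · have ha2 := hanti m (n - 2) (by omega) (by omega)
    have ha1 := hanti m (n - 1) (by omega) (by omega)
    have ew2 : w (n - 2) = 0 := by omega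
    have ew1 : w (n - 1) = 0 := by omega
    have e3 : b (n - 3) = 2 * b (n - 1) := by omega
    rcases Nat.eq_or_lt_of_le hm3 with heq | hlt'
    · rw [heq] at hc; omega
    · have hwj : ∀ j, m ≤ j → j ≤ n - 3 → w j = 0 := by
        intro j hj hj'
        have := hanti j (n - 2) (by omega) (by omega)
        have := hanti m j hj (by omega)
        omega
      have := chainEq n w b hm (m + 1) (n - 3 - (m + 1)) (by omega) (by omega)
        (fun j hj hj' => hwj j (by omega) (by omega))
      have h5 : m + 1 + (n - 3 - (m + 1)) = n - 3 := by omega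
      have h6 : m + 1 - 1 = m := by omega
      rw [h5, h6] at this
      omega
  · have hwj : ∀ j, 2 ≤ j → j ≤ m → 1 ≤ w j := by
      intro j hj hj'
      have := hanti j m hj' (by omega)
      omega
    have := chain1 n w b hm 2 (m - 2) (by omega) (by omega)
      (fun j hj hj' => hwj j hj (by omega))
    have h5 : 2 + (m - 2) = m := by omega
    have h6 : (2 : ℕ) - 1 = 1 := by omega
    rw [h5, h6] at this
    omega
def dcoef (n : ℕ) (i : Fin n) : ℕ :=
  if i.val = 0 then 0 else if i.val = 1 then 1 else if n - 2 ≤ i.val then 1 else 2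

lemma dcoef_val (n : ℕ) (hn : 5 ≤ n) (m : ℕ) (h : m < n) :
    (dcoef n ⟨m, h⟩ : ℤ) =
      if m = 0 then 0 else if m = 1 then 1 else if n - 2 ≤ m then 1 else 2 := by
  simp only [dcoef]
  split_ifs <;> norm_num

lemma sumd (n : ℕ) (hn : 5 ≤ n) :
    Domega n 3 - Domega n 1 = ∑ i, (dcoef n i : ℤ) • Dcoroot n i := by
  funext j
  obtain ⟨jv, hj⟩ := j
  simp only [Pi.sub_apply, Finset.sum_apply, Pi.smul_apply, smul_eq_mul]
  rcases (by omega : jv = 0 ∨ (1 ≤ jv ∧ jv ≤ n - 3) ∨ jv = n - 2 ∨ jv = n - 1) with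
    h | ⟨ha, hb⟩ | h | h
  · subst h
    rw [eval0 n hn _ hj, dcoef_val n hn 0 hj]
    simp only [Domega]
    norm_num
  · rw [evalMid n jv hn ha hb _ hj (by omega), dcoef_val n hn jv hj,
      dcoef_val n hn (jv - 1) (by omega)]
    simp only [Domega]
    rcases (by omega : jv = 1 ∨ jv = 2 ∨ 3 ≤ jv) with h | h | h
    · subst h; norm_num
    · subst h
      rw [if_neg (show ¬(2:ℕ) = 0 by omega), if_neg (show ¬(2:ℕ) = 1 by omega),
        if_neg (show ¬n - 2 ≤ 2 by omega)]
      norm_num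
    · rw [if_neg (show ¬jv < 3 by omega), if_neg (show ¬jv < 1 by omega),
        if_neg (show ¬jv = 0 by omega), if_neg (show ¬jv = 1 by omega),
        if_neg (show ¬n - 2 ≤ jv by omega), if_neg (show ¬jv - 1 = 0 by omega),
        if_neg (show ¬jv - 1 = 1 by omega), if_neg (show ¬n - 2 ≤ jv - 1 by omega)]
      norm_num
  · subst h
    rw [evalN2 n hn _ hj (by omega) (by omega), dcoef_val n hn (n - 2) hj,
      dcoef_val n hn (n - 3) (by omega), dcoef_val n hn (n - 1) (by omega)]
    simp only [Domega]
    rw [if_neg (show ¬n - 2 < 3 by omega), if_neg (show ¬n - 2 < 1 by omega),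
      if_neg (show ¬n - 2 = 0 by omega), if_neg (show ¬n - 2 = 1 by omega),
      if_pos (show n - 2 ≤ n - 2 from le_rfl),
      if_neg (show ¬n - 3 = 0 by omega), if_neg (show ¬n - 3 = 1 by omega),
      if_neg (show ¬n - 2 ≤ n - 3 by omega),
      if_neg (show ¬n - 1 = 0 by omega), if_neg (show ¬n - 1 = 1 by omega),
      if_pos (show n - 2 ≤ n - 1 by omega)]
    norm_num
  · subst h
    rw [evalN1 n hn _ hj (by omega), dcoef_val n hn (n - 1) hj,
      dcoef_val n hn (n - 2) (by omega)]
    simp only [Domega]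
    rw [if_neg (show ¬n - 1 < 3 by omega), if_neg (show ¬n - 1 < 1 by omega),
      if_neg (show ¬n - 1 = 0 by omega), if_neg (show ¬n - 1 = 1 by omega),
      if_pos (show n - 2 ≤ n - 1 by omega),
      if_neg (show ¬n - 2 = 0 by omega), if_neg (show ¬n - 2 = 1 by omega),
      if_pos (show n - 2 ≤ n - 2 from le_rfl)]
    norm_num

def Wf (n : ℕ) (v : Fin n → ℤ) (m : ℕ) : ℤ := if h : m < n then v ⟨m, h⟩ else 0

lemma Wf_pos (n : ℕ) (v : Fin n → ℤ) (m : ℕ) (h : m < n) : Wf n v m = v ⟨m, h⟩ := dif_pos h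

def Bf (n : ℕ) (c : Fin n → ℕ) (m : ℕ) : ℤ := if h : m < n then (c ⟨m, h⟩ : ℤ) else 0

lemma Bf_pos (n : ℕ) (c : Fin n → ℕ) (m : ℕ) (h : m < n) : Bf n c m = (c ⟨m, h⟩ : ℤ) :=
  dif_pos h

theorem stmt7 (n : ℕ) (hn : 5 ≤ n) :
    (DdomLE n (Domega n 1) (Domega n 3) ∧ Domega n 3 ≠ Domega n 1) ∧
    (∀ ν : Fin n → ℤ, Ddominant n ν →
      (∃ c : Fin n → ℤ, ν - Domega n 1 = ∑ i, c i • Dcoroot n i) →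
      DdomLE n (Domega n 1) ν → ν ≠ Domega n 1 → DdomLE n (Domega n 3) ν) := by
  refine ⟨⟨⟨fun i => dcoef n i, sumd n hn⟩, ?_⟩, ?_⟩
  · intro h
    have := congrFun h ⟨2, by omega⟩
    simp [Domega] at this
  intro ν hdom _ hge hne
  obtain ⟨c, hc⟩ := hge
  have happ : ∀ j : Fin n, ν j - Domega n 1 j = ∑ i, (c i : ℤ) * Dcoroot n i j := by
    intro j
    simpa using congrFun hc j
  have hb : ∀ m, 0 ≤ Bf n c m := by
    intro m
    unfold Bf
    split
    · exact Int.natCast_nonneg _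
    · exact le_refl 0
  have h0' : Wf n ν 0 = 1 + Bf n c 0 := by
    have h0n : 0 < n := by omega
    rw [Wf_pos n ν 0 h0n, Bf_pos n c 0 h0n]
    have := happ ⟨0, h0n⟩
    rw [eval0 n hn _ h0n] at this
    simp [Domega] at this
    omega
  have hm' : ∀ m, 1 ≤ m → m ≤ n - 3 → Wf n ν m = Bf n c m - Bf n c (m - 1) := by
    intro m hm1 hm2
    have hmn : m < n := by omega
    have hmn' : m - 1 < n := by omega
    rw [Wf_pos n ν m hmn, Bf_pos n c m hmn, Bf_pos n c (m - 1) hmn']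
    have := happ ⟨m, hmn⟩
    rw [evalMid n m hn hm1 hm2 _ hmn hmn'] at this
    have hd : Domega n 1 ⟨m, hmn⟩ = 0 := by
      simp only [Domega]
      rw [if_neg (by omega)]
    rw [hd] at this
    omega
  have h2' : Wf n ν (n - 2) = Bf n c (n - 2) - Bf n c (n - 3) + Bf n c (n - 1) := by
    have hA : n - 2 < n := by omega
    have hB : n - 3 < n := by omega
    have hC : n - 1 < n := by omega
    rw [Wf_pos n ν (n - 2) hA, Bf_pos n c (n - 2) hA, Bf_pos n c (n - 3) hB,
      Bf_pos n c (n - 1) hC]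
    have := happ ⟨n - 2, hA⟩
    rw [evalN2 n hn _ hA hB hC] at this
    have hd : Domega n 1 ⟨n - 2, hA⟩ = 0 := by
      simp only [Domega]
      rw [if_neg (by omega)]
    rw [hd] at this
    omega
  have h1' : Wf n ν (n - 1) = Bf n c (n - 1) - Bf n c (n - 2) := by
    have hA : n - 1 < n := by omega
    have hB : n - 2 < n := by omega
    rw [Wf_pos n ν (n - 1) hA, Bf_pos n c (n - 1) hA, Bf_pos n c (n - 2) hB]
    have := happ ⟨n - 1, hA⟩
    rw [evalN1 n hn _ hA hB] at this
    have hd : Domega n 1 ⟨n - 1, hA⟩ = 0 := by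
      simp only [Domega]
      rw [if_neg (by omega)]
    rw [hd] at this
    omega
  have hanti' : ∀ a a', a ≤ a' → a' ≤ n - 1 → Wf n ν a' ≤ Wf n ν a := by
    intro a a' haa' ha'
    have han : a < n := by omega
    have ha'n : a' < n := by omega
    rw [Wf_pos n ν a' ha'n, Wf_pos n ν a han]
    exact hdom.1 (Fin.mk_le_mk.mpr haa')
  have hsum' : 0 ≤ Wf n ν (n - 2) + Wf n ν (n - 1) := by
    have hA : n - 2 < n := by omega
    have hB : n - 1 < n := by omega
    rw [Wf_pos n ν (n - 2) hA, Wf_pos n ν (n - 1) hB]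
    exact hdom.2 ⟨n - 2, hA⟩ ⟨n - 1, hB⟩ rfl rfl
  have hne' : ¬ (Wf n ν 0 = 1 ∧ ∀ m, 1 ≤ m → m ≤ n - 1 → Wf n ν m = 0) := by
    rintro ⟨hW0, hWrest⟩
    apply hne
    funext j
    obtain ⟨jv, hj⟩ := j
    by_cases h0 : jv = 0
    · subst h0
      rw [Wf_pos n ν 0 hj] at hW0
      simp only [Domega]
      rw [if_pos (by omega)]
      exact hW0
    · have := hWrest jv (by omega) (by omega)
      rw [Wf_pos n ν jv hj] at this
      simp only [Domega]
      rw [if_neg (by omega)]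
      exact this
  obtain ⟨k3, k4, k2, k1⟩ := key n hn (Wf n ν) (Bf n c) hb h0' hm' h2' h1' hanti' hsum' hne'
  have hle : ∀ i : Fin n, dcoef n i ≤ c i := by
    intro i
    obtain ⟨iv, hi⟩ := i
    by_cases e0 : iv = 0
    · subst e0
      have hd : (dcoef n ⟨0, hi⟩ : ℤ) = 0 := by
        rw [dcoef_val n hn 0 hi]; norm_num
      omega
    · by_cases e1 : iv = 1
      · subst e1
        rw [Bf_pos n c 1 hi] at k3
        have hd : (dcoef n ⟨1, hi⟩ : ℤ) = 1 := by
          rw [dcoef_val n hn 1 hi]; norm_num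
        omega
      · by_cases e2 : iv = n - 2
        · subst e2
          rw [Bf_pos n c (n - 2) hi] at k2
          have hd : (dcoef n ⟨n - 2, hi⟩ : ℤ) = 1 := by
            rw [dcoef_val n hn (n - 2) hi,
              if_neg (by omega), if_neg (by omega), if_pos (by omega)]
          omega
        · by_cases e3 : iv = n - 1
          · subst e3
            rw [Bf_pos n c (n - 1) hi] at k1
            have hd : (dcoef n ⟨n - 1, hi⟩ : ℤ) = 1 := by
              rw [dcoef_val n hn (n - 1) hi,
                if_neg (by omega), if_neg (by omega), if_pos (by omega)]
            omega
          · have := k4 iv (by omega) (by omega)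
            rw [Bf_pos n c iv hi] at this
            have hd : (dcoef n ⟨iv, hi⟩ : ℤ) = 2 := by
              rw [dcoef_val n hn iv hi,
                if_neg (by omega), if_neg (by omega), if_neg (by omega)]
            omega
  refine ⟨fun i => c i - dcoef n i, ?_⟩
  have hEq : ν - Domega n 3 = (ν - Domega n 1) - (Domega n 3 - Domega n 1) := by
    funext j
    simp only [Pi.sub_apply]
    ring
  rw [hEq, hc, sumd n hn, ← Finset.sum_sub_distrib]
  refine Finset.sum_congr rfl (fun i _ => ?_)
  show (c i : ℤ) • Dcoroot n i - (dcoef n i : ℤ) • Dcoroot n i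
      = ((c i - dcoef n i : ℕ) : ℤ) • Dcoroot n i
  rw [Nat.cast_sub (hle i), sub_smul]
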